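/- With notation as above, if λ ≠ 0 then the pre-Lie morphism φ: g_CK^J → g_FdB is surjective if and only if 1 ∈ J and (2 ∈ J or μ ≠ λ). -/

import Mathlib

/-- Rooted trees with vertices decorated by `D` (a root decoration and a list of subtrees). -/
inductive RT (D : Type*) : Type _
  | node : D → List (RT D) → RT D

namespace RT

variable {D : Type*}

mutual
  /-- The degree of a decorated rooted tree: the sum of the (positive integer) degrees of
  the decorations of its vertices. -/
  def degN (w : D → ℕ+) : RT D → ℕ
    | .node j c => (w j : ℕ) + degListN w c
  /-- Sum of degrees of a list of trees. -/
  def degListN (w : D → ℕ+) : List (RT D) → ℕ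
    | [] => 0
    | t :: ts => degN w t + degListN w ts
end

theorem degN_pos (w : D → ℕ+) : ∀ t : RT D, 0 < degN w t
  | .node j c => by
      rw [degN]
      exact Nat.lt_of_lt_of_le (w j).2 (Nat.le_add_right _ _)

/-- The degree of a decorated rooted tree, as a positive integer. -/
def deg (w : D → ℕ+) (t : RT D) : ℕ+ := ⟨degN w t, degN_pos w t⟩

mutual
  /-- The list of all graftings of the tree `t` on the vertices of the tree `s`. -/
  def graftings (t : RT D) : RT D → List (RT D)
    | .node j c => RT.node j (t :: c) :: (graftingsList t c).map fun c' => RT.node j c'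
  /-- All ways to graft `t` on a vertex of one of the trees of a list (forest). -/
  def graftingsList (t : RT D) : List (RT D) → List (List (RT D))
    | [] => []
    | s :: rest => ((graftings t s).map fun s' => s' :: rest) ++
        ((graftingsList t rest).map fun rest' => s :: rest')
end

end RT

/-- The pre-Lie product of the free pre-Lie algebra `g_CK^J` on rooted trees decorated by `J`
(`t ∘ t' = Σ` of all graftings of `t` on the vertices of `t'`), extended bilinearly to the span
of trees. -/
noncomputable def gprod {D : Type*} (K : Type*) [Field K] (x y : RT D →₀ K) : RT D →₀ K :=
  x.sum fun t a => y.sum fun s b =>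
    (a * b) • ((RT.graftings t s).map fun u => Finsupp.single u (1 : K)).sum

/-- The Faà di Bruno pre-Lie algebra: basis `(e_i)_{i≥1}`, product
`e_i ∘ e_j = (λ j − μ) e_{i+j}`. -/
noncomputable def fdbMul (K : Type*) [Field K] (lam mu : K) (x y : ℕ+ →₀ K) : ℕ+ →₀ K :=
  x.sum fun i a => y.sum fun j b => Finsupp.single (i + j) (a * b * (lam * ((j : ℕ) : K) - mu))


namespace RT
variable {D : Type*} (w : D → ℕ+)

mutual
theorem degN_graftings (t : RT D) : ∀ (s : RT D), ∀ u ∈ graftings t s,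
    degN w u = degN w t + degN w s
  | .node j c => by
    intro u hu
    rw [graftings] at hu
    rcases List.mem_cons.1 hu with h | h
    · subst h; simp only [degN, degListN]; ring
    · obtain ⟨c', hc', rfl⟩ := List.mem_map.1 h
      have := degListN_graftingsList t c c' hc'
      simp only [degN, this]; ring
theorem degListN_graftingsList (t : RT D) : ∀ (l : List (RT D)), ∀ l' ∈ graftingsList t l,
    degListN w l' = degN w t + degListN w l
  | [] => by intro l' h; simp [graftingsList] at h
  | s :: rest => by
    intro l' h
    rw [graftingsList] at h
    rcases List.mem_append.1 h with h | h
    · obtain ⟨s', hs', rfl⟩ := List.mem_map.1 h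
      have := degN_graftings t s s' hs'
      simp only [degListN, this]; ring
    · obtain ⟨r', hr', rfl⟩ := List.mem_map.1 h
      have := degListN_graftingsList t rest r' hr'
      simp only [degListN, this]; ring
end

theorem length_graftingsList (t : RT D) : ∀ (l : List (RT D)), ∀ l' ∈ graftingsList t l,
    l'.length = l.length
  | [] => by intro l' h; simp [graftingsList] at h
  | s :: rest => by
    intro l' h
    rw [graftingsList] at h
    rcases List.mem_append.1 h with h | h
    · obtain ⟨s', _, rfl⟩ := List.mem_map.1 h; simp
    · obtain ⟨r', hr', rfl⟩ := List.mem_map.1 h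
      simp [length_graftingsList t rest r' hr']

theorem length_le_degListN : ∀ l : List (RT D), l.length ≤ degListN w l
  | [] => le_refl _
  | t :: ts => by
    rw [degListN, List.length_cons]
    have h1 := degN_pos w t
    have h2 := length_le_degListN ts
    omega

end RT
theorem gprod_single {D : Type*} (K : Type*) [Field K] (t s : RT D) :
    gprod K (Finsupp.single t 1) (Finsupp.single s 1) =
      ((RT.graftings t s).map fun u => Finsupp.single u (1 : K)).sum := by
  rw [gprod]
  rw [Finsupp.sum_single_index, Finsupp.sum_single_index] <;> simp

theorem fdbMul_single (K : Type*) [Field K] (lam mu : K) (m n : ℕ+) (a b : K) :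
    fdbMul K lam mu (Finsupp.single m a) (Finsupp.single n b) =
      Finsupp.single (m + n) (a * b * (lam * ((n : ℕ) : K) - mu)) := by
  rw [fdbMul]
  rw [Finsupp.sum_single_index, Finsupp.sum_single_index] <;> simp
namespace RT
def rootLen {D : Type*} : RT D → ℕ
  | .node _ l => l.length

theorem rootLen_lt_degN {D : Type*} (w : D → ℕ+) (t : RT D) : rootLen t < degN w t := by
  cases t with
  | node j l =>
    rw [rootLen, degN]
    have h1 := length_le_degListN w l
    have h2 : 0 < ((w j : ℕ)) := (w j).2
    omega
end RT

theorem sq_helper {a b r : ℕ} (h : a < b) (hr : r ≤ a) : a^2 + r < b^2 := by nlinarith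

theorem list_sum_smul {K M : Type*} [Field K] [AddCommGroup M] [Module K M]
    {α : Type*} (v : M) : ∀ (l : List α) (f : α → M),
    (∀ x ∈ l, ∃ a : K, f x = a • v) → ∃ a : K, (l.map f).sum = a • v
  | [], f, _ => ⟨0, by simp⟩
  | x :: xs, f, h => by
    obtain ⟨a, ha⟩ := h x List.mem_cons_self
    obtain ⟨b, hb⟩ := list_sum_smul v xs f (fun y hy => h y (List.mem_cons_of_mem x hy))
    exact ⟨a + b, by simp [ha, hb, add_smul]⟩

section Key
variable (K : Type*) [Field K] (lam mu : K) (J : Set ℕ+)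
  (φ : (RT J →₀ K) →ₗ[K] (ℕ+ →₀ K))

theorem key_lemma
    (hgen : ∀ j : J, φ (Finsupp.single (RT.node j []) 1) = Finsupp.single (j : ℕ+) 1)
    (hmor : ∀ x y : RT J →₀ K, φ (gprod K x y) = fdbMul K lam mu (φ x) (φ y)) :
    ∀ (n : ℕ) (t : RT J), (RT.degN Subtype.val t)^2 + RT.rootLen t ≤ n →
      ∃ c : K, φ (Finsupp.single t 1) = c • Finsupp.single (RT.deg Subtype.val t) 1 := by
  intro n
  induction n with
  | zero =>
    intro t h
    have := RT.degN_pos (Subtype.val : J → ℕ+) t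
    nlinarith
  | succ n ih =>
    rintro ⟨j, l⟩ h
    cases l with
    | nil =>
      refine ⟨1, ?_⟩
      have hd : RT.deg Subtype.val (RT.node j []) = (j : ℕ+) := by
        apply Subtype.ext
        show RT.degN Subtype.val (RT.node j []) = ((j : ℕ+) : ℕ)
        rw [RT.degN, RT.degListN]
        exact Nat.add_zero _
      rw [hd, hgen, one_smul]
    | cons t1 c =>
      have hdeg_t : RT.degN Subtype.val (RT.node j (t1 :: c)) =
          ((Subtype.val j : ℕ+) : ℕ) + (RT.degN Subtype.val t1 + RT.degListN Subtype.val c) := by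
        rw [RT.degN, RT.degListN]
      have hdeg_s : RT.degN Subtype.val (RT.node j c) =
          ((Subtype.val j : ℕ+) : ℕ) + RT.degListN Subtype.val c := by
        rw [RT.degN]
      have hpos1 := RT.degN_pos (Subtype.val : J → ℕ+) t1
      have hposj : 0 < ((Subtype.val j : ℕ+) : ℕ) := (Subtype.val j).2
      have hlt1 : RT.degN Subtype.val t1 < RT.degN Subtype.val (RT.node j (t1 :: c)) := by omega
      have hlts : RT.degN Subtype.val (RT.node j c) < RT.degN Subtype.val (RT.node j (t1 :: c)) := by
        omega
      have hsq : (RT.degN Subtype.val (RT.node j (t1 :: c)))^2 ≤ n + 1 :=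
        le_trans (Nat.le_add_right _ _) h
      -- IH for t1 and s
      obtain ⟨a, ha⟩ := ih t1 (by
        have h1 := RT.rootLen_lt_degN (Subtype.val : J → ℕ+) t1
        have h2 := sq_helper hlt1 h1.le
        exact Nat.lt_succ_iff.mp (lt_of_lt_of_le h2 hsq))
      obtain ⟨b, hb⟩ := ih (RT.node j c) (by
        have h1 := RT.rootLen_lt_degN (Subtype.val : J → ℕ+) (RT.node j c)
        have h2 := sq_helper hlts h1.le
        exact Nat.lt_succ_iff.mp (lt_of_lt_of_le h2 hsq))
      -- IH for the deeper graftings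
      have hdeep : ∀ c' ∈ RT.graftingsList t1 c, ∃ d : K,
          φ (Finsupp.single (RT.node j c') 1) =
            d • Finsupp.single (RT.deg Subtype.val (RT.node j (t1 :: c))) 1 := by
        intro c' hc'
        have hdegc' := RT.degListN_graftingsList Subtype.val t1 c c' hc'
        have hlen := RT.length_graftingsList t1 c c' hc'
        have hdN : RT.degN Subtype.val (RT.node j c') =
            RT.degN Subtype.val (RT.node j (t1 :: c)) := by
          rw [RT.degN, hdegc']; omega
        have hdeq : RT.deg Subtype.val (RT.node j c') =
            RT.deg Subtype.val (RT.node j (t1 :: c)) := Subtype.ext hdN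
        rw [← hdeq]
        apply ih
        rw [hdN]
        have hrl : RT.rootLen (RT.node j c') = c.length := by rw [RT.rootLen, hlen]
        have hrt : RT.rootLen (RT.node j (t1 :: c)) = c.length + 1 := by
          rw [RT.rootLen, List.length_cons]
        rw [hrl]
        rw [hrt] at h
        omega
      -- the grafting identity
      have hg : gprod K (Finsupp.single t1 1) (Finsupp.single (RT.node j c) 1) =
          Finsupp.single (RT.node j (t1 :: c)) (1 : K) +
            ((RT.graftingsList t1 c).map fun c' => Finsupp.single (RT.node j c') (1 : K)).sum := by
        rw [gprod_single, RT.graftings, List.map_cons, List.sum_cons, List.map_map]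
        rfl
      have hsingle : Finsupp.single (RT.node j (t1 :: c)) (1 : K) =
          gprod K (Finsupp.single t1 1) (Finsupp.single (RT.node j c) 1) -
            ((RT.graftingsList t1 c).map fun c' => Finsupp.single (RT.node j c') (1 : K)).sum := by
        rw [hg]; abel
      -- apply φ
      obtain ⟨d, hd⟩ := list_sum_smul (K := K)
        (Finsupp.single (RT.deg Subtype.val (RT.node j (t1 :: c))) (1 : K))
        (RT.graftingsList t1 c) (fun c' => φ (Finsupp.single (RT.node j c') 1)) hdeep
      have hdegadd : RT.deg Subtype.val t1 + RT.deg Subtype.val (RT.node j c) =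
          RT.deg Subtype.val (RT.node j (t1 :: c)) := by
        apply Subtype.ext
        show (RT.degN Subtype.val t1) + (RT.degN Subtype.val (RT.node j c)) =
          RT.degN Subtype.val (RT.node j (t1 :: c))
        omega
      refine ⟨a * b * (lam * ((RT.degN Subtype.val (RT.node j c) : ℕ) : K) - mu) - d, ?_⟩
      rw [hsingle, map_sub, hmor, ha, hb, map_list_sum, List.map_map]
      have hmul : fdbMul K lam mu (a • Finsupp.single (RT.deg Subtype.val t1) (1:K))
          (b • Finsupp.single (RT.deg Subtype.val (RT.node j c)) (1:K)) =
          Finsupp.single (RT.deg Subtype.val (RT.node j (t1 :: c)))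
            (a * b * (lam * ((RT.degN Subtype.val (RT.node j c) : ℕ) : K) - mu)) := by
        rw [Finsupp.smul_single, Finsupp.smul_single, smul_eq_mul, smul_eq_mul, mul_one,
          mul_one, fdbMul_single, hdegadd]
        rfl
      rw [hmul]
      have hd' : (List.map (⇑φ ∘ fun c' => Finsupp.single (RT.node j c') (1:K))
          (RT.graftingsList t1 c)).sum
          = d • Finsupp.single (RT.deg Subtype.val (RT.node j (t1 :: c))) (1:K) := hd
      rw [hd', sub_smul]
      simp [Finsupp.smul_single]

end Key
theorem phi_apply_zero {K : Type*} [Field K] {J : Set ℕ+}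
    (φ : (RT J →₀ K) →ₗ[K] (ℕ+ →₀ K)) (p : ℕ+)
    (h : ∀ t : RT J, φ (Finsupp.single t 1) p = 0) : ∀ x, φ x p = 0 := by
  intro x
  induction x using Finsupp.induction_linear with
  | zero => simp
  | add f g hf hg => rw [map_add, Finsupp.add_apply, hf, hg, add_zero]
  | single t a =>
    have ht : Finsupp.single t a = a • Finsupp.single t (1 : K) := by
      rw [Finsupp.smul_single, smul_eq_mul, mul_one]
    rw [ht, map_smul, Finsupp.smul_apply, h, smul_zero]

theorem degListN_eq_zero {D : Type*} (w : D → ℕ+) (l : List (RT D))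
    (h : RT.degListN w l = 0) : l = [] := by
  cases l with
  | nil => rfl
  | cons t ts =>
    rw [RT.degListN] at h
    have := RT.degN_pos w t
    omega

theorem degListN_eq_one {D : Type*} (w : D → ℕ+) (l : List (RT D))
    (h : RT.degListN w l = 1) : ∃ t1, l = [t1] ∧ RT.degN w t1 = 1 := by
  cases l with
  | nil => rw [RT.degListN] at h; omega
  | cons t ts =>
    rw [RT.degListN] at h
    have h1 := RT.degN_pos w t
    have h2 : RT.degListN w ts = 0 := by omega
    have h3 : RT.degN w t = 1 := by omega
    exact ⟨t, by rw [degListN_eq_zero w ts h2], h3⟩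

theorem degN_eq_one {D : Type*} (w : D → ℕ+) (t : RT D)
    (h : RT.degN w t = 1) : ∃ j, t = RT.node j [] ∧ ((w j : ℕ)) = 1 := by
  cases t with
  | node j l =>
    rw [RT.degN] at h
    have h1 : 0 < ((w j : ℕ)) := (w j).2
    have h2 : RT.degListN w l = 0 := by omega
    exact ⟨j, by rw [degListN_eq_zero w l h2], by omega⟩

theorem graftings_leaf {D : Type*} (t : RT D) (j : D) :
    RT.graftings t (RT.node j []) = [RT.node j [t]] := by
  rw [RT.graftings, RT.graftingsList, List.map_nil]
/-- With `λ ≠ 0`, the pre-Lie morphism `φ : g_CK^J → g_FdB` (the unique one with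
`φ(•_j) = e_j`, where `e_i ∘ e_j = (λj−μ) e_{i+j}`) is surjective if and only if
`1 ∈ J` and (`2 ∈ J` or `μ ≠ λ`). -/
theorem phi_surjective_iff_of_lam_ne_zero (K : Type*) [Field K] [CharZero K] (lam mu : K)
    (hlam : lam ≠ 0) (J : Set ℕ+)
    (φ : (RT J →₀ K) →ₗ[K] (ℕ+ →₀ K))
    (hgen : ∀ j : J, φ (Finsupp.single (RT.node j []) 1) = Finsupp.single (j : ℕ+) 1)
    (hmor : ∀ x y : RT J →₀ K, φ (gprod K x y) = fdbMul K lam mu (φ x) (φ y)) :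
    Function.Surjective φ ↔ ((1 : ℕ+) ∈ J ∧ ((2 : ℕ+) ∈ J ∨ mu ≠ lam)) := by
  have key : ∀ t : RT J, ∃ c : K,
      φ (Finsupp.single t 1) = c • Finsupp.single (RT.deg Subtype.val t) 1 :=
    fun t => key_lemma K lam mu J φ hgen hmor _ t le_rfl
  constructor
  · intro hsurj
    have h1 : (1 : ℕ+) ∈ J := by
      by_contra h1
      have hz : ∀ x, φ x (1 : ℕ+) = 0 := by
        apply phi_apply_zero
        intro t
        obtain ⟨c, hc⟩ := key t
        have hd : RT.deg Subtype.val t ≠ (1 : ℕ+) := by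
          intro he
          have hdn : RT.degN Subtype.val t = 1 := congrArg (fun p : ℕ+ => (p : ℕ)) he
          obtain ⟨j, _, hj⟩ := degN_eq_one Subtype.val t hdn
          have hj' : (j : ℕ+) = (1 : ℕ+) := PNat.coe_eq_one_iff.mp hj
          exact h1 (hj' ▸ j.2)
        rw [hc, Finsupp.smul_apply, Finsupp.single_eq_of_ne' hd, smul_zero]
      obtain ⟨x, hx⟩ := hsurj (Finsupp.single 1 1)
      have h := hz x
      rw [hx, Finsupp.single_eq_same] at h
      exact one_ne_zero h
    refine ⟨h1, ?_⟩
    by_contra hcon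
    push_neg at hcon
    obtain ⟨h2J, hmulam⟩ := hcon
    have hz : ∀ x, φ x (2 : ℕ+) = 0 := by
      apply phi_apply_zero
      intro t
      by_cases hd : RT.degN Subtype.val t = 2
      · obtain ⟨j, l⟩ := t
        rw [RT.degN] at hd
        have hjpos : 0 < ((Subtype.val j : ℕ+) : ℕ) := (Subtype.val j).2
        rcases (by omega : ((Subtype.val j : ℕ+) : ℕ) = 2 ∨
            (((Subtype.val j : ℕ+) : ℕ) = 1 ∧ RT.degListN Subtype.val l = 1)) with hj2 | ⟨hj1, hl1⟩
        · exfalso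
          have : (j : ℕ+) = (2 : ℕ+) := by
            apply PNat.coe_injective
            rw [hj2]; decide
          exact h2J (this ▸ j.2)
        · obtain ⟨t1, rfl, ht1⟩ := degListN_eq_one Subtype.val l hl1
          obtain ⟨j1, rfl, hj1'⟩ := degN_eq_one Subtype.val t1 ht1
          have hjj1 : j = j1 := Subtype.ext (PNat.coe_injective (hj1.trans hj1'.symm))
          subst hjj1
          have hs : Finsupp.single (RT.node j [RT.node j []]) (1 : K)
              = gprod K (Finsupp.single (RT.node j []) 1) (Finsupp.single (RT.node j []) 1) := by
            rw [gprod_single, graftings_leaf, List.map_cons, List.map_nil, List.sum_cons,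
              List.sum_nil, add_zero]
          rw [hs, hmor, hgen, fdbMul_single]
          have hco : ((Subtype.val j : ℕ+) : ℕ) = 1 := hj1
          rw [hco]
          simp [hmulam]
      · obtain ⟨c, hc⟩ := key t
        have hne : RT.deg Subtype.val t ≠ (2 : ℕ+) := by
          intro he
          exact hd (congrArg (fun p : ℕ+ => (p : ℕ)) he)
        rw [hc, Finsupp.smul_apply, Finsupp.single_eq_of_ne' hne, smul_zero]
    obtain ⟨x, hx⟩ := hsurj (Finsupp.single 2 1)
    have h := hz x
    rw [hx, Finsupp.single_eq_same] at h
    exact one_ne_zero h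
  · rintro ⟨h1, h2⟩
    have hscale : ∀ (p : ℕ+) (c : K), c ≠ 0 →
        Finsupp.single p c ∈ LinearMap.range φ →
        Finsupp.single p (1 : K) ∈ LinearMap.range φ := by
      rintro p c hc ⟨x, hx⟩
      exact ⟨c⁻¹ • x, by rw [map_smul, hx, Finsupp.smul_single, smul_eq_mul,
        inv_mul_cancel₀ hc]⟩
    have hclose : ∀ m n : ℕ+, Finsupp.single m (1 : K) ∈ LinearMap.range φ →
        Finsupp.single n (1 : K) ∈ LinearMap.range φ →
        Finsupp.single (m + n) (lam * ((n : ℕ) : K) - mu) ∈ LinearMap.range φ := by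
      rintro m n ⟨x, hx⟩ ⟨y, hy⟩
      exact ⟨gprod K x y, by rw [hmor, hx, hy, fdbMul_single, one_mul, one_mul]⟩
    have he1 : Finsupp.single (1 : ℕ+) (1 : K) ∈ LinearMap.range φ :=
      ⟨Finsupp.single (RT.node ⟨1, h1⟩ []) 1, hgen ⟨1, h1⟩⟩
    have he2 : Finsupp.single (2 : ℕ+) (1 : K) ∈ LinearMap.range φ := by
      rcases h2 with h2 | h2
      · exact ⟨Finsupp.single (RT.node ⟨2, h2⟩ []) 1, hgen ⟨2, h2⟩⟩
      · have hm := hclose 1 1 he1 he1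
        have h11 : (1 : ℕ+) + 1 = 2 := by decide
        rw [h11] at hm
        apply hscale 2 _ _ hm
        have : (((1 : ℕ+) : ℕ) : K) = 1 := by norm_num
        rw [this, mul_one]
        exact sub_ne_zero.mpr (fun he => h2 he.symm)
    have hall : ∀ N : ℕ, ∀ n : ℕ+, (n : ℕ) ≤ N →
        Finsupp.single n (1 : K) ∈ LinearMap.range φ := by
      intro N
      induction N with
      | zero => intro n hn; exact absurd hn (by have := n.pos; omega)
      | succ N ihN =>
        intro n hn
        by_cases hle : (n : ℕ) ≤ N
        · exact ihN n hle
        rcases (by omega : (n : ℕ) = 1 ∨ (n : ℕ) = 2 ∨ 3 ≤ (n : ℕ)) with hc1 | hc2 | hc3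
        · rw [PNat.coe_eq_one_iff.mp hc1]; exact he1
        · have : n = 2 := PNat.coe_injective (by rw [hc2]; decide)
          rw [this]; exact he2
        · set q : ℕ+ := ⟨(n : ℕ) - 1, by omega⟩ with hqdef
          set p : ℕ+ := ⟨(n : ℕ) - 2, by omega⟩ with hpdef
          have hq := ihN q (by show (n : ℕ) - 1 ≤ N; omega)
          have hp := ihN p (by show (n : ℕ) - 2 ≤ N; omega)
          have hq1 : (1 : ℕ+) + q = n := by
            apply PNat.coe_injective
            rw [PNat.add_coe]
            show 1 + ((n : ℕ) - 1) = (n : ℕ); omega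
          have hp2 : (2 : ℕ+) + p = n := by
            apply PNat.coe_injective
            rw [PNat.add_coe]
            show ((2:ℕ+):ℕ) + ((n : ℕ) - 2) = (n : ℕ)
            have : ((2:ℕ+):ℕ) = 2 := by decide
            omega
          have hqc : ((q : ℕ) : K) = ((n : ℕ) : K) - 1 := by
            show (((n : ℕ) - 1 : ℕ) : K) = _
            rw [Nat.cast_sub (by omega)]; norm_num
          have hpc : ((p : ℕ) : K) = ((n : ℕ) : K) - 2 := by
            show (((n : ℕ) - 2 : ℕ) : K) = _
            rw [Nat.cast_sub (by omega)]; norm_num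
          by_cases hcoef : lam * ((q : ℕ) : K) - mu = 0
          · have hm := hclose 2 p he2 hp
            rw [hp2] at hm
            apply hscale n _ _ hm
            rw [hpc]
            rw [hqc] at hcoef
            intro hzero
            apply hlam
            linear_combination hcoef - hzero
          · have hm := hclose 1 q he1 hq
            rw [hq1] at hm
            exact hscale n _ hcoef hm
    intro y
    have hy : y ∈ LinearMap.range φ := by
      induction y using Finsupp.induction_linear with
      | zero => exact zero_mem _
      | add f g hf hg => exact add_mem hf hg
      | single n a =>
        have := Submodule.smul_mem _ a (hall (n : ℕ) n le_rfl)
        rwa [Finsupp.smul_single, smul_eq_mul, mul_one] at this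
    exact hy
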